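/- Let n, k ∈ ℕ and N = n + k. Let Q = Q([N]) be a blue/red colored Boolean lattice with no blue copy of Λ. Then there is no red copy of Q_n in Q if and only if for every k-element subset Y ⊆ [N] there exists a blue Y-shrub in Q (with respect to the partition [N] = ([N]\Y) ∪ Y). -/

import Mathlib

/-- With blue/red coloring `c` (blue = `true`, red = `false`) of the Boolean lattice on a
ground set partitioned into `X ∪ Y`, there is a red `X`-good copy of `Q(X)`: an embedding
`φ` of `Q(X)` with all images red and `φ(A) ∩ X = A` for all `A ⊆ X`. -/
def RedXGoodCopy {V : Type*} [DecidableEq V] (c : Finset V → Bool) (X : Finset V) : Prop :=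
  ∃ φ : Finset V → Finset V,
    (∀ A B : Finset V, A ⊆ X → B ⊆ X → (A ⊆ B ↔ φ A ⊆ φ B)) ∧
    (∀ A : Finset V, A ⊆ X → φ A ∩ X = A) ∧
    (∀ A : Finset V, A ⊆ X → c (φ A) = false)

/-- `S` is an ordered subset of `Y`: a sequence of distinct elements of `Y`
(a vertex of the factorial tree `O(Y)`, ordered by the prefix relation `<+:`). -/
def OrdSubset {V : Type*} (Y : Finset V) (S : List V) : Prop :=
  S.Nodup ∧ ∀ v ∈ S, v ∈ Y

/-- `τ` is a `Y`-good embedding of the factorial tree `O(Y)` into the Boolean lattice: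
for ordered subsets `S, T` of `Y`, `S` is a prefix of `T` iff `τ S ⊆ τ T`, and
`τ S ∩ Y` is the underlying set of `S`. Its image is a `Y`-shrub. -/
def IsShrubMap {V : Type*} [DecidableEq V] (Y : Finset V) (τ : List V → Finset V) : Prop :=
  (∀ S T : List V, OrdSubset Y S → OrdSubset Y T → (S <+: T ↔ τ S ⊆ τ T)) ∧
  (∀ S : List V, OrdSubset Y S → τ S ∩ Y = S.toFinset)

/-- `τ` determines a weak `Y`-shrub: `τ S ∩ Y` is the underlying set of `S` for every
ordered subset `S` of `Y`, and `τ S ⊊ τ T` whenever `S` is a strict prefix of `T`. -/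
def IsWeakShrubMap {V : Type*} [DecidableEq V] (Y : Finset V) (τ : List V → Finset V) : Prop :=
  (∀ S T : List V, OrdSubset Y S → OrdSubset Y T → S <+: T → S ≠ T → τ S ⊂ τ T) ∧
  (∀ S : List V, OrdSubset Y S → τ S ∩ Y = S.toFinset)

/-- There is a monochromatic blue `Y`-shrub (blue = `true`). -/
def BlueYShrub {V : Type*} [DecidableEq V] (c : Finset V → Bool) (Y : Finset V) : Prop :=
  ∃ τ : List V → Finset V, IsShrubMap Y τ ∧ ∀ S : List V, OrdSubset Y S → c (τ S) = true

/-- The coloring `c` admits no blue copy of the poset `Λ`: there are no blue vertices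
`A, B, C` with `A ⊂ C`, `B ⊂ C` and `A`, `B` incomparable. -/
def NoBlueLambda {V : Type*} (c : Finset V → Bool) : Prop :=
  ¬ ∃ A B C : Finset V, c A = true ∧ c B = true ∧ c C = true ∧
      A ⊂ C ∧ B ⊂ C ∧ ¬ A ⊆ B ∧ ¬ B ⊆ A



open Classical in
/-- depth-indexed "good" predicate: `Z` is blue and supports a partial shrub of
depth `m` over the remaining elements of `Y`. -/
def GoodN {V : Type*} [DecidableEq V] (c : Finset V → Bool) (Y : Finset V) :
    ℕ → Finset V → Prop
  | 0, Z => c Z = true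
  | (m+1), Z => c Z = true ∧ ∀ v ∈ Y, v ∉ Z → ∃ Z',
      insert v Z ⊆ Z' ∧ Z' ∩ Y = insert v (Z ∩ Y) ∧ GoodN c Y m Z'

def Good {V : Type*} [DecidableEq V] (c : Finset V → Bool) (Y : Finset V) (Z : Finset V) : Prop :=
  GoodN c Y ((Y \ (Z ∩ Y)).card) Z

section aux
variable {V : Type*} [DecidableEq V] {c : Finset V → Bool} {Y : Finset V}

lemma Good.blue {Z : Finset V} (h : Good c Y Z) : c Z = true := by
  unfold Good at h
  cases hn : (Y \ (Z ∩ Y)).card <;> rw [hn] at h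
  · exact h
  · exact h.1

lemma good_iff {Z : Finset V} :
    Good c Y Z ↔ c Z = true ∧ ∀ v ∈ Y, v ∉ Z → ∃ Z',
      insert v Z ⊆ Z' ∧ Z' ∩ Y = insert v (Z ∩ Y) ∧ Good c Y Z' := by
  have hcard : ∀ (v : V) (Z' : Finset V), v ∈ Y → v ∉ Z →
      Z' ∩ Y = insert v (Z ∩ Y) → (Y \ (Z' ∩ Y)).card = (Y \ (Z ∩ Y)).card - 1 := by
    intro v Z' hv hvz h2
    have hmem : v ∈ Y \ (Z ∩ Y) := by
      simp only [Finset.mem_sdiff, Finset.mem_inter]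
      exact ⟨hv, fun hh => hvz hh.1⟩
    rw [h2]
    have : Y \ insert v (Z ∩ Y) = (Y \ (Z ∩ Y)).erase v := by
      ext x
      simp only [Finset.mem_sdiff, Finset.mem_insert, Finset.mem_erase]
      tauto
    rw [this, Finset.card_erase_of_mem hmem]
  unfold Good
  cases hn : (Y \ (Z ∩ Y)).card with
  | zero =>
    rw [GoodN]
    constructor
    · intro h
      refine ⟨h, ?_⟩
      intro v hv hvz
      exfalso
      have : v ∈ Y \ (Z ∩ Y) := by
        simp only [Finset.mem_sdiff, Finset.mem_inter]
        exact ⟨hv, fun hh => hvz hh.1⟩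
      rw [Finset.card_eq_zero] at hn
      simp [hn] at this
    · exact fun h => h.1
  | succ m =>
    rw [GoodN]
    constructor
    · rintro ⟨hc, hall⟩
      refine ⟨hc, ?_⟩
      intro v hv hvz
      obtain ⟨Z', h1, h2, h3⟩ := hall v hv hvz
      refine ⟨Z', h1, h2, ?_⟩
      rw [hcard v Z' hv hvz h2, hn]
      exact h3
    · rintro ⟨hc, hall⟩
      refine ⟨hc, ?_⟩
      intro v hv hvz
      obtain ⟨Z', h1, h2, h3⟩ := hall v hv hvz
      refine ⟨Z', h1, h2, ?_⟩
      rw [hcard v Z' hv hvz h2, hn] at h3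
      exact h3

end aux

section walk
variable {V : Type*} [DecidableEq V]

open Classical in
/-- the greedy walk: starting from trace `W`, keep extending the trace while the
current set `A ∪ W` is blue, using obstruction witnesses. -/
noncomputable def walkN (c : Finset V → Bool) (Y : Finset V) : ℕ → Finset V → Finset V → Finset V
  | 0, _, W => W
  | (m+1), A, W =>
    if h : c (A ∪ W) = true ∧ ∃ v, (v ∈ Y ∧ v ∉ A ∪ W) ∧
        ∀ Z' : Finset V, insert v (A ∪ W) ⊆ Z' → Z' ∩ Y = insert v W → ¬ Good c Y Z'
    then walkN c Y m A (insert h.2.choose W) else W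

variable {c : Finset V → Bool} {Y : Finset V}

lemma union_inter_of_disj {A W : Finset V} (hA : A ∩ Y = ∅) (hW : W ⊆ Y) :
    (A ∪ W) ∩ Y = W := by
  rw [Finset.union_inter_distrib_right, hA, Finset.empty_union,
    Finset.inter_eq_left.mpr hW]

lemma walkN_spec : ∀ (m : ℕ) (A W : Finset V), A ∩ Y = ∅ → W ⊆ Y → (Y \ W).card ≤ m →
    (∀ B : Finset V, B ∩ Y = ∅ → A ⊆ B → ¬ Good c Y (B ∪ W)) →
    W ⊆ walkN c Y m A W ∧ walkN c Y m A W ⊆ Y ∧ c (A ∪ walkN c Y m A W) = false ∧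
    (∀ B : Finset V, B ∩ Y = ∅ → A ⊆ B → ¬ Good c Y (B ∪ walkN c Y m A W)) ∧
    (∀ u ∈ walkN c Y m A W, u ∈ W ∨
      ∃ T, W ⊆ T ∧ T ⊆ walkN c Y m A W ∧ c (A ∪ T) = true) := by
  have hred : ∀ (A W : Finset V), A ∩ Y = ∅ → W ⊆ Y →
      (∀ B : Finset V, B ∩ Y = ∅ → A ⊆ B → ¬ Good c Y (B ∪ W)) →
      ¬ (c (A ∪ W) = true ∧ ∃ v, (v ∈ Y ∧ v ∉ A ∪ W) ∧
        ∀ Z' : Finset V, insert v (A ∪ W) ⊆ Z' → Z' ∩ Y = insert v W → ¬ Good c Y Z') →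
      c (A ∪ W) = false := by
    intro A W hA hW hInv hneg
    cases hc : c (A ∪ W) with
    | false => rfl
    | true =>
      exfalso
      have hng := hInv A hA (subset_refl A)
      rw [good_iff] at hng
      push_neg at hng
      obtain ⟨v, hv, hvz, hall⟩ := hng hc
      refine hneg ⟨hc, v, ⟨hv, hvz⟩, ?_⟩
      intro Z' h1 h2
      exact hall Z' h1 (by rw [h2, union_inter_of_disj hA hW])
  intro m
  induction m with
  | zero =>
    intro A W hA hW hcard hInv
    have hWY : Y ⊆ W := by
      rw [Nat.le_zero, Finset.card_eq_zero, Finset.sdiff_eq_empty_iff_subset] at hcard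
      exact hcard
    have hcfalse : c (A ∪ W) = false := by
      refine hred A W hA hW hInv ?_
      rintro ⟨_, v, ⟨hv, hvz⟩, _⟩
      exact hvz (Finset.mem_union_right _ (hWY hv))
    exact ⟨subset_refl _, hW, hcfalse, hInv, fun u hu => Or.inl hu⟩
  | succ m ih =>
    intro A W hA hW hcard hInv
    by_cases hcond : c (A ∪ W) = true ∧ ∃ v, (v ∈ Y ∧ v ∉ A ∪ W) ∧
        ∀ Z' : Finset V, insert v (A ∪ W) ⊆ Z' → Z' ∩ Y = insert v W → ¬ Good c Y Z'
    · have heq : walkN c Y (m+1) A W = walkN c Y m A (insert hcond.2.choose W) := by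
        rw [walkN, dif_pos hcond]
      set v := hcond.2.choose with hvdef
      obtain ⟨⟨hvY, hvAW⟩, hwit⟩ := hcond.2.choose_spec
      have hvW : v ∉ W := fun h => hvAW (Finset.mem_union_right _ h)
      have hWY' : insert v W ⊆ Y := Finset.insert_subset hvY hW
      have hcard' : (Y \ insert v W).card ≤ m := by
        have h1 : Y \ insert v W = (Y \ W).erase v := by
          ext x
          simp only [Finset.mem_sdiff, Finset.mem_insert, Finset.mem_erase]
          tauto
        have hvYW : v ∈ Y \ W := Finset.mem_sdiff.mpr ⟨hvY, hvW⟩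
        rw [h1, Finset.card_erase_of_mem hvYW]
        omega
      have hInv' : ∀ B : Finset V, B ∩ Y = ∅ → A ⊆ B → ¬ Good c Y (B ∪ insert v W) := by
        intro B hB hAB
        refine hwit _ ?_ ?_
        · intro x hx
          rcases Finset.mem_insert.mp hx with rfl | hx'
          · exact Finset.mem_union_right _ (Finset.mem_insert_self _ _)
          · rcases Finset.mem_union.mp hx' with h | h
            · exact Finset.mem_union_left _ (hAB h)
            · exact Finset.mem_union_right _ (Finset.mem_insert_of_mem h)
        · exact union_inter_of_disj hB hWY'
      obtain ⟨g1, g2, g3, g4, g5⟩ := ih A (insert v W) hA hWY' hcard' hInv'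
      rw [heq]
      refine ⟨(Finset.subset_insert v W).trans g1, g2, g3, g4, ?_⟩
      intro u hu
      rcases g5 u hu with h | ⟨T, hT1, hT2, hT3⟩
      · rcases Finset.mem_insert.mp h with rfl | h'
        · exact Or.inr ⟨W, subset_refl _, (Finset.subset_insert _ W).trans g1, hcond.1⟩
        · exact Or.inl h'
      · exact Or.inr ⟨T, (Finset.subset_insert v W).trans hT1, hT2, hT3⟩
    · have heq : walkN c Y (m+1) A W = W := by rw [walkN, dif_neg hcond]
      rw [heq]
      exact ⟨subset_refl _, hW, hred A W hA hW hInv hcond, hInv, fun u hu => Or.inl hu⟩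

noncomputable def gdef (c : Finset V → Bool) (Y : Finset V) (A : Finset V) : Finset V :=
  let U := (A.powerset.erase A).attach.sup fun p =>
    have : p.1.card < A.card := by
      have hp := p.2
      rw [Finset.mem_erase, Finset.mem_powerset] at hp
      exact Finset.card_lt_card (Finset.ssubset_iff_subset_ne.mpr ⟨hp.2, hp.1⟩)
    gdef c Y p.1
  walkN c Y ((Y \ U).card) A U
termination_by A.card

lemma gdef_eq (c : Finset V → Bool) (Y : Finset V) (A : Finset V) :
    gdef c Y A = walkN c Y ((Y \ ((A.powerset.erase A).sup (gdef c Y))).card) A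
      ((A.powerset.erase A).sup (gdef c Y)) := by
  rw [gdef]
  have : ((A.powerset.erase A).attach.sup fun p => gdef c Y p.1)
      = (A.powerset.erase A).sup (gdef c Y) := by
    rw [Finset.sup_attach]
  simp only [this]

lemma exists_sup_eq {α : Type*} [DecidableEq α] {s : Finset (Finset α)} {f : Finset α → Finset α}
    (hne : s.Nonempty) (hch : ∀ a ∈ s, ∀ b ∈ s, f a ⊆ f b ∨ f b ⊆ f a) :
    ∃ a ∈ s, s.sup f = f a := by
  induction s using Finset.induction_on with
  | empty => exact absurd hne (by simp)
  | @insert a s ha ih =>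
    rcases s.eq_empty_or_nonempty with rfl | hsne
    · exact ⟨a, Finset.mem_insert_self _ _, by simp⟩
    · obtain ⟨b, hb, hsup⟩ := ih hsne
        (fun x hx y hy => hch x (Finset.mem_insert_of_mem hx) y (Finset.mem_insert_of_mem hy))
      rcases hch a (Finset.mem_insert_self _ _) b (Finset.mem_insert_of_mem hb) with h | h
      · refine ⟨b, Finset.mem_insert_of_mem hb, ?_⟩
        rw [Finset.sup_insert, hsup]
        exact sup_eq_right.mpr h
      · refine ⟨a, Finset.mem_insert_self _ _, ?_⟩
        rw [Finset.sup_insert, hsup]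
        exact sup_eq_left.mpr h

end walk

section main
variable {V : Type*} [DecidableEq V] {c : Finset V → Bool} {Y : Finset V}

lemma gdef_spec (hΛ : NoBlueLambda c) (hb : ∀ Z : Finset V, Z ∩ Y = ∅ → ¬ Good c Y Z) :
    ∀ A : Finset V, A ∩ Y = ∅ →
      gdef c Y A ⊆ Y ∧ c (A ∪ gdef c Y A) = false ∧
      (∀ B : Finset V, B ∩ Y = ∅ → A ⊆ B → ¬ Good c Y (B ∪ gdef c Y A)) ∧
      (∀ A', A' ⊆ A → gdef c Y A' ⊆ gdef c Y A) ∧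
      (∀ v ∈ gdef c Y A, ∃ A'' T, A'' ⊆ A ∧ T ⊆ gdef c Y A'' ∧ T ⊆ Y ∧
        v ∈ gdef c Y A'' ∧ c (A'' ∪ T) = true) := by
  intro A
  induction A using Finset.strongInductionOn with
  | _ A ih =>
  intro hA
  have hdisj : ∀ A', A' ⊆ A → A' ∩ Y = ∅ := by
    intro A' h
    have : A' ∩ Y ⊆ A ∩ Y := Finset.inter_subset_inter_right h
    rw [hA] at this
    exact Finset.subset_empty.mp this
  have hpe : ∀ {A' : Finset V}, A' ∈ A.powerset.erase A ↔ A' ⊆ A ∧ A' ≠ A := by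
    intro A'
    rw [Finset.mem_erase, Finset.mem_powerset]
    tauto
  have hss : ∀ {A' : Finset V}, A' ∈ A.powerset.erase A → A' ⊂ A := by
    intro A' h
    rw [hpe] at h
    exact Finset.ssubset_iff_subset_ne.mpr ⟨h.1, h.2⟩
  set U := (A.powerset.erase A).sup (gdef c Y) with hU
  have hUY : U ⊆ Y := by
    have h : U ≤ Y := Finset.sup_le fun A' hA' => (ih A' (hss hA') (hdisj A' (hss hA').1)).1
    exact h
  have hInvU : ∀ B : Finset V, B ∩ Y = ∅ → A ⊆ B → ¬ Good c Y (B ∪ U) := by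
    by_cases hch : ∀ A₁ ∈ A.powerset.erase A, ∀ A₂ ∈ A.powerset.erase A,
        gdef c Y A₁ ⊆ gdef c Y A₂ ∨ gdef c Y A₂ ⊆ gdef c Y A₁
    · rcases (A.powerset.erase A).eq_empty_or_nonempty with hemp | hne
      · intro B hB hAB
        rw [hU, hemp]
        simpa using hb B hB
      · obtain ⟨Astar, hmem, hsup⟩ := exists_sup_eq hne hch
        intro B hB hAB
        rw [hU, hsup]
        exact (ih _ (hss hmem) (hdisj _ (hss hmem).1)).2.2.1 B hB
          (subset_trans (hss hmem).1 hAB)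
    · push_neg at hch
      obtain ⟨A₁, h₁, A₂, h₂, hns1, hns2⟩ := hch
      obtain ⟨v₁, hv₁g, hv₁n⟩ := Finset.not_subset.mp hns1
      obtain ⟨v₂, hv₂g, hv₂n⟩ := Finset.not_subset.mp hns2
      obtain ⟨A₁', T₁, hsub₁, hT₁g, hT₁Y, hvg₁, hblue₁⟩ :=
        (ih A₁ (hss h₁) (hdisj _ (hss h₁).1)).2.2.2.2 v₁ hv₁g
      obtain ⟨A₂', T₂, hsub₂, hT₂g, hT₂Y, hvg₂, hblue₂⟩ :=
        (ih A₂ (hss h₂) (hdisj _ (hss h₂).1)).2.2.2.2 v₂ hv₂g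
      have hA₁'A₂ : ¬ A₁' ⊆ A₂ := by
        intro hcon
        exact hv₁n ((ih A₂ (hss h₂) (hdisj _ (hss h₂).1)).2.2.2.1 A₁' hcon hvg₁)
      have hA₂'A₁ : ¬ A₂' ⊆ A₁ := by
        intro hcon
        exact hv₂n ((ih A₁ (hss h₁) (hdisj _ (hss h₁).1)).2.2.2.1 A₂' hcon hvg₂)
      have hd₁ : A₁' ∩ Y = ∅ := hdisj A₁' (hsub₁.trans (hss h₁).1)
      have hd₂ : A₂' ∩ Y = ∅ := hdisj A₂' (hsub₂.trans (hss h₂).1)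
      have hZ₁₂ : ¬ (A₁' ∪ T₁ ⊆ A₂' ∪ T₂) := by
        intro h
        refine hA₁'A₂ ?_
        intro a ha
        have := h (Finset.mem_union_left _ ha)
        rcases Finset.mem_union.mp this with h' | h'
        · exact hsub₂ h'
        · exfalso
          have : a ∈ A₁' ∩ Y := Finset.mem_inter.mpr ⟨ha, hT₂Y h'⟩
          rw [hd₁] at this
          exact absurd this (Finset.notMem_empty a)
      have hZ₂₁ : ¬ (A₂' ∪ T₂ ⊆ A₁' ∪ T₁) := by
        intro h
        refine hA₂'A₁ ?_
        intro a ha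
        have := h (Finset.mem_union_left _ ha)
        rcases Finset.mem_union.mp this with h' | h'
        · exact hsub₁ h'
        · exfalso
          have : a ∈ A₂' ∩ Y := Finset.mem_inter.mpr ⟨ha, hT₁Y h'⟩
          rw [hd₂] at this
          exact absurd this (Finset.notMem_empty a)
      intro B hB hAB
      have hZ₁C : A₁' ∪ T₁ ⊆ B ∪ U := by
        refine Finset.union_subset ?_ ?_
        · exact (hsub₁.trans ((hss h₁).1.trans hAB)).trans Finset.subset_union_left
        · refine subset_trans ?_ Finset.subset_union_right
          exact (hT₁g.trans ((ih A₁ (hss h₁) (hdisj _ (hss h₁).1)).2.2.2.1 A₁' hsub₁)).trans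
            (Finset.le_sup h₁)
      have hZ₂C : A₂' ∪ T₂ ⊆ B ∪ U := by
        refine Finset.union_subset ?_ ?_
        · exact (hsub₂.trans ((hss h₂).1.trans hAB)).trans Finset.subset_union_left
        · refine subset_trans ?_ Finset.subset_union_right
          exact (hT₂g.trans ((ih A₂ (hss h₂) (hdisj _ (hss h₂).1)).2.2.2.1 A₂' hsub₂)).trans
            (Finset.le_sup h₂)
      intro hgood
      have hc : c (B ∪ U) = true := hgood.blue
      refine hΛ ⟨A₁' ∪ T₁, A₂' ∪ T₂, B ∪ U, hblue₁, hblue₂, hc, ?_, ?_, hZ₁₂, hZ₂₁⟩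
      · refine Finset.ssubset_iff_subset_ne.mpr ⟨hZ₁C, ?_⟩
        intro h
        exact hZ₂₁ (h ▸ hZ₂C)
      · refine Finset.ssubset_iff_subset_ne.mpr ⟨hZ₂C, ?_⟩
        intro h
        exact hZ₁₂ (h ▸ hZ₁C)
  have heq : gdef c Y A = walkN c Y ((Y \ U).card) A U := gdef_eq c Y A
  obtain ⟨w1, w2, w3, w4, w5⟩ := walkN_spec ((Y \ U).card) A U hA hUY (le_refl _) hInvU
  rw [← heq] at w1 w2 w3 w4 w5
  have hmono : ∀ A', A' ⊆ A → gdef c Y A' ⊆ gdef c Y A := by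
    intro A' hsub
    by_cases h : A' = A
    · subst h; exact subset_refl _
    · exact (Finset.le_sup (hpe.mpr ⟨hsub, h⟩)).trans w1
  refine ⟨w2, w3, w4, hmono, ?_⟩
  intro v hv
  rcases w5 v hv with h | ⟨T, hT1, hT2, hT3⟩
  · rw [hU] at h
    obtain ⟨A', hA'mem, hvA'⟩ := Finset.mem_sup.mp h
    obtain ⟨A'', T, r1, r2, r3, r4, r5⟩ :=
      (ih A' (hss hA'mem) (hdisj _ (hss hA'mem).1)).2.2.2.2 v hvA'
    exact ⟨A'', T, r1.trans (hss hA'mem).1, r2, r3, r4, r5⟩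
  · exact ⟨A, T, subset_refl _, hT2, hT2.trans w2, hv, hT3⟩

end main

section dichotomy
variable {V : Type*} [DecidableEq V] {c : Finset V → Bool} {Y : Finset V}

lemma exists_redgood (hΛ : NoBlueLambda c) (hb : ∀ Z : Finset V, Z ∩ Y = ∅ → ¬ Good c Y Z)
    (X : Finset V) (hXY : X ∩ Y = ∅) : RedXGoodCopy c X := by
  have hdisj : ∀ A : Finset V, A ⊆ X → A ∩ Y = ∅ := by
    intro A h
    have h2 : A ∩ Y ⊆ X ∩ Y := Finset.inter_subset_inter_right h
    rw [hXY] at h2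
    exact Finset.subset_empty.mp h2
  have spec := gdef_spec hΛ hb
  refine ⟨fun A => A ∪ gdef c Y A, ?_, ?_, ?_⟩
  · intro A B hAX hBX
    constructor
    · intro hAB
      exact Finset.union_subset
        (hAB.trans Finset.subset_union_left)
        (((spec B (hdisj B hBX)).2.2.2.1 A hAB).trans Finset.subset_union_right)
    · intro h
      intro a ha
      have h1 : a ∈ B ∪ gdef c Y B := h (Finset.mem_union_left _ ha)
      rcases Finset.mem_union.mp h1 with h' | h'
      · exact h'
      · exfalso
        have haY : a ∈ Y := (spec B (hdisj B hBX)).1 h'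
        have : a ∈ X ∩ Y := Finset.mem_inter.mpr ⟨hAX ha, haY⟩
        rw [hXY] at this
        exact absurd this (Finset.notMem_empty a)
  · intro A hAX
    apply Finset.Subset.antisymm
    · intro a ha
      obtain ⟨h1, h2⟩ := Finset.mem_inter.mp ha
      rcases Finset.mem_union.mp h1 with h' | h'
      · exact h'
      · exfalso
        have haY : a ∈ Y := (spec A (hdisj A hAX)).1 h'
        have : a ∈ X ∩ Y := Finset.mem_inter.mpr ⟨h2, haY⟩
        rw [hXY] at this
        exact absurd this (Finset.notMem_empty a)
    · intro a ha
      exact Finset.mem_inter.mpr ⟨Finset.mem_union_left _ ha, hAX ha⟩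
  · intro A hAX
    exact (spec A (hdisj A hAX)).2.1

end dichotomy

section shrub
variable {V : Type*} [DecidableEq V] {c : Finset V → Bool} {Y : Finset V}

open Classical in
noncomputable def sstep (c : Finset V → Bool) (Y : Finset V) (Z : Finset V) (v : V) : Finset V :=
  if h : ∃ Z', (insert v Z ⊆ Z' ∧ Z' ∩ Y = insert v (Z ∩ Y)) ∧ Good c Y Z'
  then h.choose else ∅

lemma sstep_spec {Z : Finset V} {v : V}
    (h : ∃ Z', (insert v Z ⊆ Z' ∧ Z' ∩ Y = insert v (Z ∩ Y)) ∧ Good c Y Z') :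
    insert v Z ⊆ sstep c Y Z v ∧ (sstep c Y Z v) ∩ Y = insert v (Z ∩ Y) ∧
      Good c Y (sstep c Y Z v) := by
  rw [sstep, dif_pos h]
  obtain ⟨⟨h1, h2⟩, h3⟩ := h.choose_spec
  exact ⟨h1, h2, h3⟩

lemma fold_spec : ∀ (S : List V) (Z : Finset V), S.Nodup → (∀ v ∈ S, v ∈ Y) →
    (∀ v ∈ S, v ∉ Z) → Good c Y Z →
    Z ⊆ S.foldl (sstep c Y) Z ∧
    (S.foldl (sstep c Y) Z) ∩ Y = (Z ∩ Y) ∪ S.toFinset ∧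
    Good c Y (S.foldl (sstep c Y) Z) := by
  intro S
  induction S with
  | nil =>
    intro Z _ _ _ hg
    refine ⟨subset_refl _, by simp, hg⟩
  | cons v S' ihS =>
    intro Z hnd hmem hnotZ hg
    have hvY : v ∈ Y := hmem v List.mem_cons_self
    have hvZ : v ∉ Z := hnotZ v List.mem_cons_self
    have hex : ∃ Z', (insert v Z ⊆ Z' ∧ Z' ∩ Y = insert v (Z ∩ Y)) ∧ Good c Y Z' := by
      obtain ⟨Z', h1, h2, h3⟩ := (good_iff.mp hg).2 v hvY hvZ
      exact ⟨Z', ⟨h1, h2⟩, h3⟩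
    obtain ⟨s1, s2, s3⟩ := sstep_spec hex
    set Z₁ := sstep c Y Z v with hZ₁
    have hnd' : S'.Nodup := (List.nodup_cons.mp hnd).2
    have hvS' : v ∉ S' := (List.nodup_cons.mp hnd).1
    have hmem' : ∀ u ∈ S', u ∈ Y := fun u hu => hmem u (List.mem_cons_of_mem v hu)
    have hnotZ₁ : ∀ u ∈ S', u ∉ Z₁ := by
      intro u hu hcon
      have huY : u ∈ Y := hmem' u hu
      have : u ∈ Z₁ ∩ Y := Finset.mem_inter.mpr ⟨hcon, huY⟩
      rw [s2] at this
      rcases Finset.mem_insert.mp this with rfl | h'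
      · exact hvS' hu
      · exact hnotZ u (List.mem_cons_of_mem v hu) (Finset.mem_inter.mp h').1
    obtain ⟨f1, f2, f3⟩ := ihS Z₁ hnd' hmem' hnotZ₁ s3
    rw [List.foldl_cons]
    refine ⟨subset_trans (subset_trans (Finset.subset_insert v Z) s1) f1, ?_, f3⟩
    rw [f2, s2, List.toFinset_cons]
    ext x
    simp only [Finset.mem_union, Finset.mem_insert]
    tauto

lemma weak_shrub_of_good {Z₀ : Finset V} (hZ : Z₀ ∩ Y = ∅) (hg : Good c Y Z₀) :
    ∃ τ : List V → Finset V, IsWeakShrubMap Y τ ∧ ∀ S, OrdSubset Y S → c (τ S) = true := by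
  refine ⟨fun S => S.foldl (sstep c Y) Z₀, ?_, ?_⟩
  · constructor
    · intro S T hS hT hpre hne
      obtain ⟨T', rfl⟩ := hpre
      have hT'ne : T' ≠ [] := by
        intro h
        subst h
        exact hne (by simp)
      have hnS : S.Nodup := (List.nodup_append'.mp hT.1).1
      have hnT' : T'.Nodup := (List.nodup_append'.mp hT.1).2.1
      have hdisjST : ∀ u ∈ S, u ∉ T' := by
        have := (List.nodup_append'.mp hT.1).2.2
        intro u hu
        exact this hu
      have hSmem : ∀ v ∈ S, v ∈ Y := hS.2
      have hSnotZ : ∀ v ∈ S, v ∉ Z₀ := by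
        intro v hv hcon
        have : v ∈ Z₀ ∩ Y := Finset.mem_inter.mpr ⟨hcon, hS.2 v hv⟩
        rw [hZ] at this
        exact absurd this (Finset.notMem_empty v)
      obtain ⟨f1, f2, f3⟩ := fold_spec S Z₀ hnS hSmem hSnotZ hg
      have hT'mem : ∀ u ∈ T', u ∈ Y := fun u hu => hT.2 u (List.mem_append_right S hu)
      have hT'notτS : ∀ u ∈ T', u ∉ S.foldl (sstep c Y) Z₀ := by
        intro u hu hcon
        have : u ∈ (S.foldl (sstep c Y) Z₀) ∩ Y :=
          Finset.mem_inter.mpr ⟨hcon, hT'mem u hu⟩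
        rw [f2, hZ, Finset.empty_union] at this
        exact hdisjST u (List.mem_toFinset.mp this) hu
      obtain ⟨g1, g2, g3⟩ := fold_spec T' _ hnT' hT'mem hT'notτS f3
      show List.foldl (sstep c Y) Z₀ S ⊂ List.foldl (sstep c Y) Z₀ (S ++ T')
      rw [List.foldl_append]
      refine Finset.ssubset_iff_subset_ne.mpr ⟨g1, ?_⟩
      intro hcon
      obtain ⟨u, hu⟩ := List.exists_mem_of_ne_nil T' hT'ne
      have huτ : u ∈ T'.foldl (sstep c Y) (S.foldl (sstep c Y) Z₀) := by
        have : u ∈ (T'.foldl (sstep c Y) (S.foldl (sstep c Y) Z₀)) ∩ Y := by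
          rw [g2, f2, hZ, Finset.empty_union]
          exact Finset.mem_union_right _ (List.mem_toFinset.mpr hu)
        exact (Finset.mem_inter.mp this).1
      rw [← hcon] at huτ
      exact hT'notτS u hu huτ
    · intro S hS
      have hSnotZ : ∀ v ∈ S, v ∉ Z₀ := by
        intro v hv hcon
        have : v ∈ Z₀ ∩ Y := Finset.mem_inter.mpr ⟨hcon, hS.2 v hv⟩
        rw [hZ] at this
        exact absurd this (Finset.notMem_empty v)
      obtain ⟨_, f2, _⟩ := fold_spec S Z₀ hS.1 hS.2 hSnotZ hg
      show (List.foldl (sstep c Y) Z₀ S) ∩ Y = S.toFinset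
      rw [f2, hZ, Finset.empty_union]
  · intro S hS
    have hSnotZ : ∀ v ∈ S, v ∉ Z₀ := by
      intro v hv hcon
      have : v ∈ Z₀ ∩ Y := Finset.mem_inter.mpr ⟨hcon, hS.2 v hv⟩
      rw [hZ] at this
      exact absurd this (Finset.notMem_empty v)
    exact (fold_spec S Z₀ hS.1 hS.2 hSnotZ hg).2.2.blue

end shrub

section upgrade
variable {V : Type*} [DecidableEq V] {c : Finset V → Bool} {Y : Finset V}

lemma list_trichotomy : ∀ (S T : List V), S <+: T ∨ T <+: S ∨
    ∃ (R : List V) (a b : V), a ≠ b ∧ (R ++ [a]) <+: S ∧ (R ++ [b]) <+: T := by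
  intro S
  induction S with
  | nil => intro T; exact Or.inl (List.nil_prefix)
  | cons x S' ih =>
    intro T
    cases T with
    | nil => exact Or.inr (Or.inl (List.nil_prefix))
    | cons y T' =>
      by_cases hxy : x = y
      · subst hxy
        rcases ih T' with h | h | ⟨R, a, b, hab, h1, h2⟩
        · exact Or.inl (List.cons_prefix_cons.mpr ⟨rfl, h⟩)
        · exact Or.inr (Or.inl (List.cons_prefix_cons.mpr ⟨rfl, h⟩))
        · refine Or.inr (Or.inr ⟨x :: R, a, b, hab, ?_, ?_⟩)
          · show (x :: R) ++ [a] <+: x :: S'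
            rw [List.cons_append]
            exact List.cons_prefix_cons.mpr ⟨rfl, h1⟩
          · show (x :: R) ++ [b] <+: x :: T'
            rw [List.cons_append]
            exact List.cons_prefix_cons.mpr ⟨rfl, h2⟩
      · refine Or.inr (Or.inr ⟨[], x, y, hxy, ⟨S', rfl⟩, ⟨T', rfl⟩⟩)

lemma ordsubset_of_prefix {L T : List V} (hT : OrdSubset Y T) (h : L <+: T) :
    OrdSubset Y L :=
  ⟨hT.1.sublist h.sublist, fun v hv => hT.2 v (h.sublist.subset hv)⟩

lemma shrub_of_weak {τ : List V → Finset V} (hw : IsWeakShrubMap Y τ)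
    (hblue : ∀ S, OrdSubset Y S → c (τ S) = true) (hΛ : NoBlueLambda c) :
    IsShrubMap Y τ := by
  have hmono : ∀ L M, OrdSubset Y L → OrdSubset Y M → L <+: M → τ L ⊆ τ M := by
    intro L M hL hM hpre
    by_cases h : L = M
    · subst h; exact subset_refl _
    · exact (hw.1 L M hL hM hpre h).subset
  refine ⟨?_, hw.2⟩
  intro S T hS hT
  constructor
  · exact hmono S T hS hT
  · intro hsub
    rcases list_trichotomy S T with h | h | ⟨R, a, b, hab, h1, h2⟩
    · exact h
    · by_cases he : S = T
      · subst he; exact List.prefix_refl S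
      · exfalso
        have hstrict := hw.1 T S hT hS h (fun hc => he hc.symm)
        exact (Finset.ssubset_iff_subset_ne.mp hstrict).2
          (Finset.Subset.antisymm (Finset.ssubset_iff_subset_ne.mp hstrict).1 hsub)
        -- τT ⊂ τS and τS ⊆ τT: contradiction
    · exfalso
      have oRa : OrdSubset Y (R ++ [a]) := ordsubset_of_prefix hS h1
      have oRb : OrdSubset Y (R ++ [b]) := ordsubset_of_prefix hT h2
      have hRaT : τ (R ++ [a]) ⊆ τ T := (hmono _ _ oRa hS h1).trans hsub
      have hRbT : τ (R ++ [b]) ⊆ τ T := hmono _ _ oRb hT h2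
      have tra : τ (R ++ [a]) ∩ Y = (R ++ [a]).toFinset := hw.2 _ oRa
      have trb : τ (R ++ [b]) ∩ Y = (R ++ [b]).toFinset := hw.2 _ oRb
      have trT : τ T ∩ Y = T.toFinset := hw.2 _ hT
      have haR : a ∉ R := by
        have := (List.nodup_append'.mp oRa.1).2.2
        intro hc
        exact this hc (List.mem_singleton_self a)
      have hbR : b ∉ R := by
        have := (List.nodup_append'.mp oRb.1).2.2
        intro hc
        exact this hc (List.mem_singleton_self b)
      have haY : a ∈ Y := oRa.2 a (List.mem_append_right R (List.mem_singleton_self a))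
      have hbY : b ∈ Y := oRb.2 b (List.mem_append_right R (List.mem_singleton_self b))
      have haRa : a ∈ τ (R ++ [a]) := by
        have : a ∈ (R ++ [a]).toFinset := by simp
        rw [← tra] at this
        exact (Finset.mem_inter.mp this).1
      have hbRb : b ∈ τ (R ++ [b]) := by
        have : b ∈ (R ++ [b]).toFinset := by simp
        rw [← trb] at this
        exact (Finset.mem_inter.mp this).1
      have hanotb : a ∉ τ (R ++ [b]) := by
        intro hc
        have : a ∈ (R ++ [b]).toFinset := by
          rw [← trb]; exact Finset.mem_inter.mpr ⟨hc, haY⟩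
        simp only [List.toFinset_append, List.toFinset_cons, List.toFinset_nil,
          Finset.mem_union, List.mem_toFinset] at this
        rcases this with h' | h'
        · exact haR h'
        · simp at h'
          exact hab h'
      have hbnota : b ∉ τ (R ++ [a]) := by
        intro hc
        have : b ∈ (R ++ [a]).toFinset := by
          rw [← tra]; exact Finset.mem_inter.mpr ⟨hc, hbY⟩
        simp only [List.toFinset_append, List.toFinset_cons, List.toFinset_nil,
          Finset.mem_union, List.mem_toFinset] at this
        rcases this with h' | h'
        · exact hbR h'
        · simp at h'
          exact hab h'.symm
      have hab1 : ¬ τ (R ++ [a]) ⊆ τ (R ++ [b]) := fun hc => hanotb (hc haRa)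
      have hab2 : ¬ τ (R ++ [b]) ⊆ τ (R ++ [a]) := fun hc => hbnota (hc hbRb)
      have hssa : τ (R ++ [a]) ⊂ τ T := by
        refine Finset.ssubset_iff_subset_ne.mpr ⟨hRaT, ?_⟩
        intro hc
        exact hab2 (hc ▸ hRbT)
      have hssb : τ (R ++ [b]) ⊂ τ T := by
        refine Finset.ssubset_iff_subset_ne.mpr ⟨hRbT, ?_⟩
        intro hc
        exact hab1 (hc ▸ hRaT)
      exact hΛ ⟨τ (R ++ [a]), τ (R ++ [b]), τ T, hblue _ oRa, hblue _ oRb, hblue _ hT,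
        hssa, hssb, hab1, hab2⟩

end upgrade

section chase
variable {V : Type*} [Fintype V] [DecidableEq V] {c : Finset V → Bool} {Y : Finset V}

lemma chase {φ : Finset V → Finset V} {τ : List V → Finset V} (hτ : IsShrubMap Y τ)
    (hmono : ∀ D D' : Finset V, D ⊆ Yᶜ → D' ⊆ Yᶜ → D ⊆ D' → φ D ⊆ φ D')
    (htr : ∀ D : Finset V, D ⊆ Yᶜ → φ D ∩ Yᶜ = D) :
    ∃ (D : Finset V) (S : List V), D ⊆ Yᶜ ∧ OrdSubset Y S ∧ φ D = τ S := by
  have hsplit : ∀ s : Finset V, s ∩ Yᶜ ∪ s ∩ Y = s := by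
    intro s
    ext x
    simp only [Finset.mem_union, Finset.mem_inter, Finset.mem_compl]
    by_cases hx : x ∈ Y <;> tauto
  have main : ∀ (m : ℕ) (S : List V), OrdSubset Y S →
      S.toFinset ⊆ φ (τ S ∩ Yᶜ) ∩ Y → (Y \ S.toFinset).card ≤ m →
      ∃ (D : Finset V) (S' : List V), D ⊆ Yᶜ ∧ OrdSubset Y S' ∧ φ D = τ S' := by
    intro m
    induction m with
    | zero =>
      intro S hS hinv hcard
      refine ⟨τ S ∩ Yᶜ, S, Finset.inter_subset_right, hS, ?_⟩
      have heq : φ (τ S ∩ Yᶜ) ∩ Y = S.toFinset := by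
        refine Finset.Subset.antisymm ?_ hinv
        intro u hu
        have huY : u ∈ Y := (Finset.mem_inter.mp hu).2
        rw [Nat.le_zero, Finset.card_eq_zero, Finset.sdiff_eq_empty_iff_subset] at hcard
        exact hcard huY
      calc φ (τ S ∩ Yᶜ) = φ (τ S ∩ Yᶜ) ∩ Yᶜ ∪ φ (τ S ∩ Yᶜ) ∩ Y := (hsplit _).symm
        _ = (τ S ∩ Yᶜ) ∪ (τ S ∩ Y) := by
            rw [htr _ Finset.inter_subset_right, heq, hτ.2 S hS]
        _ = τ S := hsplit _
    | succ m ih =>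
      intro S hS hinv hcard
      by_cases heq : φ (τ S ∩ Yᶜ) ∩ Y = S.toFinset
      · refine ⟨τ S ∩ Yᶜ, S, Finset.inter_subset_right, hS, ?_⟩
        calc φ (τ S ∩ Yᶜ) = φ (τ S ∩ Yᶜ) ∩ Yᶜ ∪ φ (τ S ∩ Yᶜ) ∩ Y := (hsplit _).symm
          _ = (τ S ∩ Yᶜ) ∪ (τ S ∩ Y) := by
              rw [htr _ Finset.inter_subset_right, heq, hτ.2 S hS]
          _ = τ S := hsplit _
      · obtain ⟨v, hv, hvn⟩ := Finset.not_subset.mp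
          (fun hc => heq (Finset.Subset.antisymm hc hinv))
        have hvY : v ∈ Y := (Finset.mem_inter.mp hv).2
        have hvS : v ∉ S := fun hc => hvn (List.mem_toFinset.mpr hc)
        set S' : List V := S ++ [v] with hS'def
        have hS' : OrdSubset Y S' := by
          constructor
          · rw [List.nodup_append']
            exact ⟨hS.1, List.nodup_singleton v, by
              intro u hu hc
              rw [List.mem_singleton] at hc
              subst hc
              exact hvS hu⟩
          · intro u hu
            rcases List.mem_append.mp hu with h | h
            · exact hS.2 u h
            · rw [List.mem_singleton] at h
              subst h
              exact hvY
        have hpre : S <+: S' := ⟨[v], rfl⟩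
        have hττ : τ S ⊆ τ S' := (hτ.1 S S' hS hS').mp hpre
        have hDD : τ S ∩ Yᶜ ⊆ τ S' ∩ Yᶜ := Finset.inter_subset_inter_right hττ
        have hφφ : φ (τ S ∩ Yᶜ) ⊆ φ (τ S' ∩ Yᶜ) :=
          hmono _ _ Finset.inter_subset_right Finset.inter_subset_right hDD
        have hinv' : S'.toFinset ⊆ φ (τ S' ∩ Yᶜ) ∩ Y := by
          rw [hS'def]
          intro u hu
          have hu' : u ∈ S ∨ u = v := by
            revert hu
            simp [List.mem_toFinset]
            tauto
          rcases hu' with h | h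
          · exact Finset.inter_subset_inter hφφ (subset_refl _) (hinv (List.mem_toFinset.mpr h))
          · subst h
            exact Finset.inter_subset_inter hφφ (subset_refl _) hv
        have hcard' : (Y \ S'.toFinset).card ≤ m := by
          have h1 : S'.toFinset = insert v S.toFinset := by
            rw [hS'def]
            ext x
            simp only [List.toFinset_append, List.toFinset_cons, List.toFinset_nil,
              Finset.mem_union, Finset.mem_insert, List.mem_toFinset]
            simp [List.mem_toFinset]
            tauto
          have h2 : Y \ S'.toFinset = (Y \ S.toFinset).erase v := by
            rw [h1]
            ext x
            simp only [Finset.mem_sdiff, Finset.mem_insert, Finset.mem_erase]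
            tauto
          have hvm : v ∈ Y \ S.toFinset :=
            Finset.mem_sdiff.mpr ⟨hvY, fun hc => hvS (List.mem_toFinset.mp hc)⟩
          rw [h2, Finset.card_erase_of_mem hvm]
          omega
        exact ih S' hS' hinv' hcard'
  refine main (Y \ ([] : List V).toFinset).card [] ⟨List.nodup_nil, by simp⟩ ?_ (le_refl _)
  simp
end chase

/-- Let `N = n + k` and let `Q([N])` be blue/red colored with no blue copy
of `Λ`. Then there is no red copy of `Q_n` if and only if for every `k`-element subset
`Y ⊆ [N]` there is a blue `Y`-shrub. -/
theorem statement15 (n k : ℕ) (c : Finset (Fin (n + k)) → Bool) (hΛ : NoBlueLambda c) :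
    (¬ ∃ f : Finset (Fin n) → Finset (Fin (n + k)),
        Function.Injective f ∧
        (∀ A B : Finset (Fin n), A ⊆ B ↔ f A ⊆ f B) ∧
        ∀ A : Finset (Fin n), c (f A) = false) ↔
      (∀ Y : Finset (Fin (n + k)), Y.card = k → BlueYShrub c Y) := by
  constructor
  · -- no red copy → every k-set has a blue shrub
    intro hno Y hYk
    have hXY : Yᶜ ∩ Y = ∅ := by ext a; simp
    have hXn : Yᶜ.card = n := by
      rw [Finset.card_compl, hYk, Fintype.card_fin]
      omega
    have hnoRed : ¬ RedXGoodCopy c Yᶜ := by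
      rintro ⟨φ, hiff, htr, hred⟩
      apply hno
      set e := (Yᶜ.equivFinOfCardEq hXn).symm with he
      have hinj : Function.Injective (fun i : Fin n => (e i : Fin (n + k))) := by
        intro a b h
        exact e.injective (Subtype.coe_injective h)
      set emb : Fin n ↪ Fin (n + k) := ⟨fun i => (e i : Fin (n + k)), hinj⟩ with hemb
      have hmX : ∀ A : Finset (Fin n), A.map emb ⊆ Yᶜ := by
        intro A x hx
        rw [Finset.mem_map] at hx
        obtain ⟨i, _, rfl⟩ := hx
        exact (e i).2
      refine ⟨fun A => φ (A.map emb), ?_, ?_, ?_⟩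
      · intro A B hAB
        have h1 : A.map emb ⊆ B.map emb :=
          (hiff (A.map emb) (B.map emb) (hmX A) (hmX B)).mpr (le_of_eq hAB)
        have h2 : B.map emb ⊆ A.map emb :=
          (hiff (B.map emb) (A.map emb) (hmX B) (hmX A)).mpr (le_of_eq hAB.symm)
        have h3 : A.map emb = B.map emb := Finset.Subset.antisymm h1 h2
        exact Finset.map_injective emb h3
      · intro A B
        rw [← hiff (A.map emb) (B.map emb) (hmX A) (hmX B)]
        exact (Finset.map_subset_map).symm
      · intro A
        exact hred (A.map emb) (hmX A)
    have hgood : ∃ Z : Finset (Fin (n + k)), Z ∩ Y = ∅ ∧ Good c Y Z := by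
      by_contra hcon
      push_neg at hcon
      exact hnoRed (exists_redgood hΛ (fun Z hz => hcon Z hz) Yᶜ hXY)
    obtain ⟨Z₀, hZ₀, hg⟩ := hgood
    obtain ⟨τ, hwτ, hbl⟩ := weak_shrub_of_good hZ₀ hg
    exact ⟨τ, shrub_of_weak hwτ hbl hΛ, hbl⟩
  · -- shrubs everywhere → no red copy
    rintro hsh ⟨f, finj, fiff, fred⟩
    -- extraction of coordinates
    have hxex : ∀ i : Fin n, ∃ x, x ∈ f {i} ∧ x ∉ f (Finset.univ.erase i) := by
      intro i
      have h1 : ¬ ({i} : Finset (Fin n)) ⊆ Finset.univ.erase i := by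
        intro h
        have := h (Finset.mem_singleton_self i)
        rw [Finset.mem_erase] at this
        exact this.1 rfl
      have h2 : ¬ f {i} ⊆ f (Finset.univ.erase i) := fun h => h1 ((fiff _ _).mpr h)
      exact Finset.not_subset.mp h2
    set x : Fin n → Fin (n + k) := fun i => (hxex i).choose with hxdef
    have hkey : ∀ (i : Fin n) (A : Finset (Fin n)), x i ∈ f A ↔ i ∈ A := by
      intro i A
      constructor
      · intro h
        by_contra hi
        have hsub : A ⊆ Finset.univ.erase i := by
          intro a ha
          rw [Finset.mem_erase]
          exact ⟨fun hc => hi (hc ▸ ha), Finset.mem_univ a⟩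
        exact (hxex i).choose_spec.2 ((fiff A (Finset.univ.erase i)).mp hsub h)
      · intro h
        have hsub : ({i} : Finset (Fin n)) ⊆ A := Finset.singleton_subset_iff.mpr h
        exact (fiff _ _).mp hsub (hxex i).choose_spec.1
    have hxinj : Function.Injective x := by
      intro i j h
      by_contra hne
      have h1 : x i ∈ f {i} := (hkey i {i}).mpr (Finset.mem_singleton_self i)
      have h2 : x j ∉ f {i} := by
        intro hc
        have := (hkey j {i}).mp hc
        rw [Finset.mem_singleton] at this
        exact hne this.symm
      rw [h] at h1
      exact h2 h1
    set X : Finset (Fin (n + k)) := Finset.univ.image x with hXdef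
    have hXcard : X.card = n := by
      rw [hXdef, Finset.card_image_of_injective _ hxinj, Finset.card_univ, Fintype.card_fin]
    set Y : Finset (Fin (n + k)) := Xᶜ with hYdef
    have hYcard : Y.card = k := by
      rw [hYdef, Finset.card_compl, hXcard, Fintype.card_fin]
      omega
    obtain ⟨τ, hτ, hbl⟩ := hsh Y hYcard
    have hYcc : Yᶜ = X := by rw [hYdef, compl_compl]
    -- the X-good red embedding
    set φ : Finset (Fin (n + k)) → Finset (Fin (n + k)) :=
      fun D => f (Finset.univ.filter (fun i => x i ∈ D)) with hφdef
    have hφmono : ∀ D D' : Finset (Fin (n + k)), D ⊆ Yᶜ → D' ⊆ Yᶜ → D ⊆ D' → φ D ⊆ φ D' := by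
      intro D D' _ _ h
      refine (fiff _ _).mp ?_
      intro i hi
      rw [Finset.mem_filter] at hi ⊢
      exact ⟨hi.1, h hi.2⟩
    have hφtr : ∀ D : Finset (Fin (n + k)), D ⊆ Yᶜ → φ D ∩ Yᶜ = D := by
      intro D hD
      rw [hYcc] at hD ⊢
      ext u
      rw [Finset.mem_inter]
      constructor
      · rintro ⟨h1, h2⟩
        rw [hXdef, Finset.mem_image] at h2
        obtain ⟨i, _, rfl⟩ := h2
        have := (hkey i _).mp h1
        rw [Finset.mem_filter] at this
        exact this.2
      · intro h
        have hu : u ∈ X := hD h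
        rw [hXdef, Finset.mem_image] at hu
        obtain ⟨i, _, rfl⟩ := hu
        constructor
        · refine (hkey i _).mpr ?_
          rw [Finset.mem_filter]
          exact ⟨Finset.mem_univ i, h⟩
        · exact hD h
    obtain ⟨D, S, hD, hS, hDS⟩ := chase hτ hφmono hφtr
    have hredD : c (φ D) = false := fred _
    have hblueS : c (τ S) = true := hbl S hS
    rw [hDS, hblueS] at hredD
    exact absurd hredD (by simp)
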